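/- Let x₀ := (ℓ + u)/2 be the midpoint of the interval (ℓ, u), and let x* be the unique minimizer of Γ over (ℓ, u). Then Γ(x₀) - Γ(x*) ≤ log(32/27); in particular 375·(Γ(x₀) - Γ(x*)) < 64. -/
import Mathlib

theorem core_ineq (r y t s : ℝ) (hr : 0 < r) (hy1 : -r ≤ y) (hy2 : y ≤ r) (ht : r ≤ t) (hs : r ≤ s) :
    (r - y) * (r + y) * ((y + t) * (s - y)) ≤ 32/27 * (r * r * (t * s)) := by
  have ha : 0 ≤ r - y := by linarith
  have hb : 0 ≤ r + y := by linarith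
  have hyt : 0 ≤ y + t := by linarith
  have hsy : 0 ≤ s - y := by linarith
  have ht0 : (0:ℝ) < t := lt_of_lt_of_le hr ht
  have hs0 : (0:ℝ) < s := lt_of_lt_of_le hr hs
  have hts : 0 ≤ t * s := le_of_lt (mul_pos ht0 hs0)
  rcases le_or_gt 0 y with h | h
  · have P1 : 0 ≤ ((r - y) * (r + y) * (y + t) * y) * r :=
      mul_nonneg (mul_nonneg (mul_nonneg (mul_nonneg ha hb) hyt) h) hr.le
    have P2 : 0 ≤ ((r - y) * (r + y) * s) * (y * (t - r)) :=
      mul_nonneg (mul_nonneg (mul_nonneg ha hb) (by linarith)) (mul_nonneg h (by linarith))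
    have P3 : 0 ≤ (32 * r^3 - 27 * ((r - y) * (r + y)^2)) * (t * s) := by
      have h35 : 0 ≤ 3 * y + 5 * r := by linarith
      nlinarith [mul_nonneg (sq_nonneg (3*y - r)) h35]
    have h4 : 27 * r * ((r - y) * (r + y) * ((y + t) * (s - y))) ≤ 32 * r^3 * (t * s) := by
      nlinarith [P1, P2, P3]
    refine le_of_mul_le_mul_left ?_ (show (0:ℝ) < 27 * r by linarith)
    nlinarith [h4]
  · have P1 : 0 ≤ ((r - y) * (r + y) * (s - y) * (-y)) * r :=
      mul_nonneg (mul_nonneg (mul_nonneg (mul_nonneg ha hb) hsy) (by linarith)) hr.le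
    have P2 : 0 ≤ ((r - y) * (r + y) * t) * ((-y) * (s - r)) :=
      mul_nonneg (mul_nonneg (mul_nonneg ha hb) (by linarith)) (mul_nonneg (by linarith) (by linarith))
    have P3 : 0 ≤ (32 * r^3 - 27 * ((r + y) * (r - y)^2)) * (t * s) := by
      have h35 : 0 ≤ 5 * r - 3 * y := by linarith
      nlinarith [mul_nonneg (sq_nonneg (3*y + r)) h35]
    have h4 : 27 * r * ((r - y) * (r + y) * ((y + t) * (s - y))) ≤ 32 * r^3 * (t * s) := by
      nlinarith [P1, P2, P3]
    refine le_of_mul_le_mul_left ?_ (show (0:ℝ) < 27 * r by linarith)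
    nlinarith [h4]

theorem log_32_27_lt : Real.log (32/27) < 64/375 := by
  rw [Real.log_lt_iff_lt_exp (by norm_num)]
  have h := Real.sum_le_exp_of_nonneg (x := 64/375) (by norm_num) 4
  calc (32:ℝ)/27 < ∑ i ∈ Finset.range 4, (64/375:ℝ)^i / i.factorial := by
        simp [Finset.sum_range_succ, Nat.factorial]; norm_num
    _ ≤ Real.exp (64/375) := h

theorem phi_le (xL xR Δ ℓ u x : ℝ)
    (hℓ : ℓ = max (-Δ) xL) (hu : u = min Δ xR) (hℓu : ℓ < u)
    (hx1 : ℓ ≤ x) (hx2 : x ≤ u) :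
    (x - xL) * ((xR - x) * ((Δ + x) * (Δ - x))) ≤
      32/27 * (((ℓ+u)/2 - xL) * ((xR - (ℓ+u)/2) * ((Δ + (ℓ+u)/2) * (Δ - (ℓ+u)/2)))) := by
  set m : ℝ := (ℓ+u)/2 with hm
  set p : ℝ := min (-Δ) xL with hp
  set q : ℝ := max Δ xR with hq
  have hpℓ : p ≤ ℓ := by rw [hp, hℓ]; exact min_le_max
  have huq : u ≤ q := by rw [hq, hu]; exact min_le_max
  -- swap identities
  have hAgen : ∀ z : ℝ, (z - xL) * (Δ + z) = (z - ℓ) * (z - p) := by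
    intro z
    rcases max_cases (-Δ) xL with ⟨h1, h2⟩ | ⟨h1, h2⟩
    · have : p = xL := by rw [hp, min_eq_right h2]
      rw [hℓ, h1, this]; try ring
    · have : p = -Δ := by rw [hp, min_eq_left (le_of_lt h2)]
      rw [hℓ, h1, this]; try ring
  have hBgen : ∀ z : ℝ, (xR - z) * (Δ - z) = (u - z) * (q - z) := by
    intro z
    rcases min_cases Δ xR with ⟨h1, h2⟩ | ⟨h1, h2⟩
    · have : q = xR := by rw [hq, max_eq_right h2]
      rw [hu, h1, this]; try ring
    · have : q = Δ := by rw [hq, max_eq_left (le_of_lt h2)]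
      rw [hu, h1, this]; try ring
  have hr : (0:ℝ) < (u - ℓ)/2 := by linarith
  have hco := core_ineq ((u - ℓ)/2) (x - m) (m - p) (q - m) hr
    (by rw [hm]; linarith) (by rw [hm]; linarith)
    (by rw [hm]; linarith) (by rw [hm]; linarith)
  have hmℓ : m - ℓ = (u - ℓ)/2 := by rw [hm]; ring
  have hum : u - m = (u - ℓ)/2 := by rw [hm]; ring
  calc (x - xL) * ((xR - x) * ((Δ + x) * (Δ - x)))
      = ((x - xL) * (Δ + x)) * ((xR - x) * (Δ - x)) := by ring
    _ = ((x - ℓ) * (x - p)) * ((u - x) * (q - x)) := by rw [hAgen, hBgen]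
    _ = ((u - ℓ)/2 - (x - m)) * ((u - ℓ)/2 + (x - m)) * (((x - m) + (m - p)) * ((q - m) - (x - m))) := by
        rw [hm]; ring
    _ ≤ 32/27 * ((u - ℓ)/2 * ((u - ℓ)/2) * ((m - p) * (q - m))) := hco
    _ = 32/27 * (((m - ℓ) * (m - p)) * ((u - m) * (q - m))) := by rw [hmℓ, hum]; ring
    _ = 32/27 * (((m - xL) * (Δ + m)) * ((xR - m) * (Δ - m))) := by rw [hAgen, hBgen]
    _ = 32/27 * ((m - xL) * ((xR - m) * ((Δ + m) * (Δ - m)))) := by ring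

/-- With `x₀ = (ℓ+u)/2` the midpoint and `x*` the unique minimizer of `Γ`
over `(ℓ, u)`, the optimality gap satisfies `Γ(x₀) - Γ(x*) ≤ log(32/27)`; in particular
`375·(Γ(x₀) - Γ(x*)) < 64`. -/
theorem stmt_10 (xL xR Δ : ℝ) (hΔ : 0 < Δ) (ℓ u : ℝ)
    (hℓ : ℓ = max (-Δ) xL) (hu : u = min Δ xR) (hℓu : ℓ < u)
    (Γ : ℝ → ℝ)
    (hΓ : ∀ x, Γ x = -Real.log (x - xL) - Real.log (xR - x)
      - Real.log (Δ + x) - Real.log (Δ - x))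
    (xstar : ℝ) (hmem : xstar ∈ Set.Ioo ℓ u) (hmin : IsMinOn Γ (Set.Ioo ℓ u) xstar) :
    Γ ((ℓ + u) / 2) - Γ xstar ≤ Real.log (32 / 27) ∧
    375 * (Γ ((ℓ + u) / 2) - Γ xstar) < 64 := by
  have hxLℓ : xL ≤ ℓ := hℓ ▸ le_max_right _ _
  have hΔℓ : -Δ ≤ ℓ := hℓ ▸ le_max_left _ _
  have huΔ : u ≤ Δ := hu ▸ min_le_left _ _
  have huR : u ≤ xR := hu ▸ min_le_right _ _
  -- positivity of factors for any point of [ℓ, u] that is strictly inside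
  have hfac : ∀ x : ℝ, ℓ < x → x < u →
      0 < x - xL ∧ 0 < xR - x ∧ 0 < Δ + x ∧ 0 < Δ - x := by
    intro x h1 h2
    exact ⟨by linarith, by linarith, by linarith, by linarith⟩
  have hΓφ : ∀ x : ℝ, ℓ < x → x < u →
      Γ x = -Real.log ((x - xL) * ((xR - x) * ((Δ + x) * (Δ - x)))) := by
    intro x h1 h2
    obtain ⟨f1, f2, f3, f4⟩ := hfac x h1 h2
    rw [hΓ x, Real.log_mul (ne_of_gt f1) (by positivity),
      Real.log_mul (ne_of_gt f2) (by positivity),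
      Real.log_mul (ne_of_gt f3) (ne_of_gt f4)]
    ring
  set m : ℝ := (ℓ + u) / 2 with hm
  have hmℓ : ℓ < m := by rw [hm]; linarith
  have hmu : m < u := by rw [hm]; linarith
  obtain ⟨g1, g2, g3, g4⟩ := hfac m hmℓ hmu
  obtain ⟨hs1, hs2⟩ := hmem
  obtain ⟨f1, f2, f3, f4⟩ := hfac xstar hs1 hs2
  have hφm : 0 < (m - xL) * ((xR - m) * ((Δ + m) * (Δ - m))) := by positivity
  have hφs : 0 < (xstar - xL) * ((xR - xstar) * ((Δ + xstar) * (Δ - xstar))) := by positivity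
  have hkey := phi_le xL xR Δ ℓ u xstar hℓ hu hℓu (le_of_lt hs1) (le_of_lt hs2)
  rw [← hm] at hkey
  have hgap : Γ m - Γ xstar ≤ Real.log (32/27) := by
    rw [hΓφ m hmℓ hmu, hΓφ xstar hs1 hs2]
    have hlog : Real.log ((xstar - xL) * ((xR - xstar) * ((Δ + xstar) * (Δ - xstar))))
        ≤ Real.log (32/27 * ((m - xL) * ((xR - m) * ((Δ + m) * (Δ - m))))) :=
      Real.log_le_log hφs hkey
    rw [Real.log_mul (by norm_num) (ne_of_gt hφm)] at hlog
    linarith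
  exact ⟨hgap, by have := log_32_27_lt; linarith⟩
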